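/- Let G be a finite group with a normal subgroup S that is simple and nonabelian and whose centralizer in G is trivial (so G is almost simple with socle S), and let N be the normalizer in Sym(G) of the subgroup S*. Then S is an N-block, and every N-block of size at least 2 containing the identity of G contains S; in other words, the minimal block of N coincides with S. -/

import Mathlib

/-- The subgroup of `Sym(A)` consisting of the right translations `x ↦ x * g`. -/
def rightMuls (A : Type*) [Group A] : Subgroup (Equiv.Perm A) :=
  (MulAction.toPermHom Aᵐᵒᵖ A).range

/-- The holomorph of `A`, i.e. the normalizer in `Sym(A)` of the group of right
translations. -/
def Hol (A : Type*) [Group A] : Subgroup (Equiv.Perm A) :=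
  Subgroup.normalizer ((rightMuls A : Subgroup (Equiv.Perm A)) : Set (Equiv.Perm A))

/-- `D(2,A)`: the subgroup of `Sym(A)` generated by `Hol(A)` and the inversion
permutation `g ↦ g⁻¹`. -/
def D2 (A : Type*) [Group A] : Subgroup (Equiv.Perm A) :=
  Hol A ⊔ Subgroup.closure {Equiv.inv A}

/-- The homomorphism `H × H →* Sym(A)` sending `(h₁, h₂)` to `x ↦ h₁ * x * h₂⁻¹`. -/
def biTransHom {A : Type*} [Group A] (H : Subgroup A) : H × H →* Equiv.Perm A where
  toFun p := (Equiv.mulLeft (p.1 : A)).trans (Equiv.mulRight ((p.2 : A)⁻¹))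
  map_one' := by ext x; simp
  map_mul' p q := by ext x; simp [mul_assoc]

/-- `H*`: the subgroup of `Sym(A)` of all permutations `x ↦ h₁ * x * h₂` with
`h₁, h₂ ∈ H`. -/
def starGroup {A : Type*} [Group A] (H : Subgroup A) : Subgroup (Equiv.Perm A) :=
  (biTransHom H).range

/-- The automorphism group of the Cayley graph `Cay(A, X)`: all permutations `f`
of `A` such that `h * g⁻¹ ∈ X ↔ f h * (f g)⁻¹ ∈ X` for all `g, h`. -/
def cayAut {A : Type*} [Group A] (X : Set A) : Subgroup (Equiv.Perm A) where
  carrier := {f : Equiv.Perm A | ∀ g h : A, h * g⁻¹ ∈ X ↔ f h * (f g)⁻¹ ∈ X}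
  one_mem' := by intro g h; simp
  mul_mem' := by
    intro a b ha hb g h
    simpa [Equiv.Perm.mul_apply] using (hb g h).trans (ha (b g) (b h))
  inv_mem' := by
    intro a ha g h
    simpa using (ha (a⁻¹ g) (a⁻¹ h)).symm

/-- A `K`-block: a subset `B` such that every `k ∈ K` either fixes `B` setwise or
moves it to a disjoint set. -/
def IsBlock {A : Type*} [Group A] (K : Subgroup (Equiv.Perm A)) (B : Set A) : Prop :=
  ∀ k ∈ K, (k : Equiv.Perm A) '' B = B ∨ ((k : Equiv.Perm A) '' B) ∩ B = ∅

/-- The minimal block of `K`: the intersection of all `K`-blocks of size at least 2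
containing the identity. -/
def minBlock {A : Type*} [Group A] (K : Subgroup (Equiv.Perm A)) : Set A :=
  ⋂₀ {B : Set A | IsBlock K B ∧ (1 : A) ∈ B ∧ 2 ≤ B.ncard}

/-- The right coset `L * g`. -/
def rcoset {A : Type*} [Group A] (L : Subgroup A) (g : A) : Set A :=
  {x : A | x * g⁻¹ ∈ L}

/-- `K_𝔏`: the subgroup of all elements of `K` mapping each right coset of `L` to
itself. -/
def stabCosets {A : Type*} [Group A] (K : Subgroup (Equiv.Perm A)) (L : Subgroup A) :
    Subgroup (Equiv.Perm A) where
  carrier := {f : Equiv.Perm A | f ∈ K ∧ ∀ x : A, f x * x⁻¹ ∈ L}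
  one_mem' := ⟨K.one_mem, fun x => by simpa using L.one_mem⟩
  mul_mem' := by
    rintro a b ⟨haK, ha⟩ ⟨hbK, hb⟩
    refine ⟨K.mul_mem haK hbK, fun x => ?_⟩
    have := L.mul_mem (ha (b x)) (hb x)
    simpa [Equiv.Perm.mul_apply, mul_assoc] using this
  inv_mem' := by
    rintro a ⟨haK, ha⟩
    refine ⟨K.inv_mem haK, fun x => ?_⟩
    have := L.inv_mem (ha (a⁻¹ x))
    simpa [mul_inv_rev] using this

/-- Two subsets `X`, `X'` are equivalent (w.r.t. `K` and `L`) if every element of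
`K_𝔏` fixes `X` pointwise iff it fixes `X'` pointwise. -/
def cosetEquiv {A : Type*} [Group A] (K : Subgroup (Equiv.Perm A)) (L : Subgroup A)
    (X X' : Set A) : Prop :=
  ∀ f ∈ stabCosets K L,
    ((∀ x ∈ X, (f : Equiv.Perm A) x = x) ↔ (∀ x ∈ X', (f : Equiv.Perm A) x = x))

/-- The union `U` of the right cosets of `L` that are equivalent to `L`. -/
def Uset {A : Type*} [Group A] (K : Subgroup (Equiv.Perm A)) (L : Subgroup A) : Set A :=
  {x : A | cosetEquiv K L (L : Set A) (rcoset L x)}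

/-- A permutation group `K` is 2-closed if it contains every permutation `f` such
that every pair of points can be moved as by `f` by some element of `K`. -/
def Is2Closed {A : Type*} [Group A] (K : Subgroup (Equiv.Perm A)) : Prop :=
  ∀ f : Equiv.Perm A, (∀ a b : A, ∃ k ∈ K, (k : Equiv.Perm A) a = f a ∧ k b = f b) → f ∈ K

section AuxBlock

variable {G : Type*} [Group G] (S : Subgroup G)

lemma biTransHom_apply' (p : S × S) (x : G) :
    (biTransHom S p : Equiv.Perm G) x = (p.1 : G) * x * (p.2 : G)⁻¹ := rfl

lemma mem_starGroup' {s₁ s₂ : G} (h₁ : s₁ ∈ S) (h₂ : s₂ ∈ S) :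
    (Equiv.mulLeft s₁).trans (Equiv.mulRight s₂⁻¹) ∈ starGroup S :=
  ⟨(⟨s₁, h₁⟩, ⟨s₂, h₂⟩), rfl⟩

lemma mem_normalizer_of' {H : Subgroup (Equiv.Perm G)} {a : Equiv.Perm G}
    (h1 : ∀ x ∈ H, a * x * a⁻¹ ∈ H) (h2 : ∀ x ∈ H, a⁻¹ * x * a ∈ H) :
    a ∈ Subgroup.normalizer (H : Set (Equiv.Perm G)) := by
  rw [Subgroup.mem_normalizer_iff]
  intro h
  constructor
  · exact h1 h
  · intro hh
    have := h2 _ hh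
    simpa [mul_assoc] using this

lemma normalizer_coset_mem (hn : S.Normal)
    {k : Equiv.Perm G} (hk : k ∈ Subgroup.normalizer ((starGroup S : Subgroup (Equiv.Perm G)) : Set (Equiv.Perm G)))
    {s : G} (hs : s ∈ S) (y : G) : k (s * y) * (k y)⁻¹ ∈ S := by
  have hσ : (Equiv.mulLeft s).trans (Equiv.mulRight (1 : G)⁻¹) ∈ starGroup S :=
    mem_starGroup' S hs S.one_mem
  obtain ⟨⟨t₁, t₂⟩, ht⟩ := (Subgroup.mem_normalizer_iff.mp hk _).mp hσ
  have hval : (t₁ : G) * (k y) * (t₂ : G)⁻¹ = k (s * y) := by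
    have h := DFunLike.congr_fun ht (k y)
    simpa [biTransHom_apply', Equiv.Perm.mul_apply] using h
  have heq : k (s * y) * (k y)⁻¹ = (t₁ : G) * ((k y) * (t₂ : G)⁻¹ * (k y)⁻¹) := by
    rw [← hval]; group
  rw [heq]
  exact S.mul_mem t₁.2 (hn.conj_mem _ (S.inv_mem t₂.2) _)

lemma normalizer_image_coset (hn : S.Normal) {k : Equiv.Perm G}
    (hk : k ∈ Subgroup.normalizer ((starGroup S : Subgroup (Equiv.Perm G)) : Set (Equiv.Perm G))) (y : G) :
    k '' {x | x * y⁻¹ ∈ S} = {x | x * (k y)⁻¹ ∈ S} := by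
  ext z
  constructor
  · rintro ⟨x, hx, rfl⟩
    have hx' : x = (x * y⁻¹) * y := by group
    show k x * (k y)⁻¹ ∈ S
    rw [hx']
    exact normalizer_coset_mem S hn hk hx y
  · intro hz
    refine ⟨k⁻¹ z, ?_, k.apply_symm_apply z⟩
    have hk' : (k⁻¹ : Equiv.Perm G) ∈ Subgroup.normalizer ((starGroup S : Subgroup (Equiv.Perm G)) : Set (Equiv.Perm G)) :=
      Subgroup.inv_mem _ hk
    have h2 := normalizer_coset_mem S hn hk' hz (k y)
    simpa using h2

lemma conj_mulLeft_mem (hn : S.Normal) (g : G) :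
    ∀ x ∈ starGroup S, (Equiv.mulLeft g) * x * (Equiv.mulLeft g)⁻¹ ∈ starGroup S := by
  rintro x ⟨⟨s₁, s₂⟩, rfl⟩
  refine ⟨(⟨g * s₁ * g⁻¹, hn.conj_mem _ s₁.2 g⟩, s₂), ?_⟩
  ext z
  simp [biTransHom_apply', Equiv.Perm.mul_apply, mul_assoc]

lemma conj_mulRight_mem (hn : S.Normal) (g : G) :
    ∀ x ∈ starGroup S, (Equiv.mulRight g) * x * (Equiv.mulRight g)⁻¹ ∈ starGroup S := by
  rintro x ⟨⟨s₁, s₂⟩, rfl⟩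
  refine ⟨(s₁, ⟨g⁻¹ * s₂ * g, by simpa using hn.conj_mem _ s₂.2 g⁻¹⟩), ?_⟩
  ext z
  simp [biTransHom_apply', Equiv.Perm.mul_apply, mul_assoc]

lemma mulLeft_mem_normalizer (hn : S.Normal) (g : G) :
    Equiv.mulLeft g ∈ Subgroup.normalizer ((starGroup S : Subgroup (Equiv.Perm G)) : Set (Equiv.Perm G)) := by
  refine mem_normalizer_of' (conj_mulLeft_mem S hn g) ?_
  have h := conj_mulLeft_mem S hn g⁻¹
  simpa [Equiv.Perm.inv_def] using h

lemma mulRight_mem_normalizer (hn : S.Normal) (g : G) :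
    Equiv.mulRight g ∈ Subgroup.normalizer ((starGroup S : Subgroup (Equiv.Perm G)) : Set (Equiv.Perm G)) := by
  refine mem_normalizer_of' (conj_mulRight_mem S hn g) ?_
  have h := conj_mulRight_mem S hn g⁻¹
  simpa [Equiv.Perm.inv_def] using h

end AuxBlock

/-- for `N = N_{Sym(G)}(S*)`, the set `S` is an `N`-block, every
`N`-block of size at least 2 containing the identity contains `S`, and the minimal
block of `N` coincides with `S`. -/
theorem minBlock_of_normalizer_eq_socle (G : Type*) [Group G] [Fintype G]
    (S : Subgroup G) (hSnormal : S.Normal) (hSsimple : IsSimpleGroup S)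
    (hSnonabelian : ¬ ∀ a b : S, a * b = b * a)
    (hScent : ∀ g : G, (∀ s ∈ S, g * s = s * g) → g = 1)
    : IsBlock (Subgroup.normalizer ((starGroup S : Subgroup (Equiv.Perm G)) : Set (Equiv.Perm G))) (S : Set G) ∧
    (∀ B : Set G, IsBlock (Subgroup.normalizer ((starGroup S : Subgroup (Equiv.Perm G)) : Set (Equiv.Perm G))) B → (1 : G) ∈ B → 2 ≤ B.ncard →
      (S : Set G) ⊆ B) ∧
    minBlock (Subgroup.normalizer ((starGroup S : Subgroup (Equiv.Perm G)) : Set (Equiv.Perm G))) = (S : Set G) := by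
  set N := Subgroup.normalizer ((starGroup S : Subgroup (Equiv.Perm G)) : Set (Equiv.Perm G)) with hN
  -- S is written as the coset {x | x * 1⁻¹ ∈ S}
  have hScoset : (S : Set G) = {x | x * (1 : G)⁻¹ ∈ S} := by ext x; simp
  -- claim 1 : S is an N-block
  have claim1 : IsBlock N (S : Set G) := by
    intro k hk
    have himg : k '' (S : Set G) = {x | x * (k 1)⁻¹ ∈ S} := by
      rw [hScoset]; exact normalizer_image_coset S hSnormal hk 1
    by_cases h1 : k 1 ∈ S
    · left
      rw [himg]
      ext x
      simp only [Set.mem_setOf_eq, SetLike.mem_coe]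
      constructor
      · intro hx
        have := S.mul_mem hx h1
        simpa using this
      · intro hx
        exact S.mul_mem hx (S.inv_mem h1)
    · right
      rw [himg]
      ext x
      simp only [Set.mem_inter_iff, Set.mem_setOf_eq, SetLike.mem_coe,
        Set.mem_empty_iff_false, iff_false, not_and]
      intro hx hxS
      exact h1 (by simpa using S.mul_mem (S.inv_mem hx) hxS)
  -- claim 2
  have claim2 : ∀ B : Set G, IsBlock N B → (1 : G) ∈ B → 2 ≤ B.ncard →
      (S : Set G) ⊆ B := by
    intro B hB h1B hcard
    have key : ∀ k : Equiv.Perm G, k ∈ N → (∃ x ∈ B, k x ∈ B) → k '' B = B := by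
      intro k hk ⟨x, hx, hkx⟩
      rcases hB k hk with h | h
      · exact h
      · exfalso
        have hm : k x ∈ (⇑k '' B) ∩ B := ⟨⟨x, hx, rfl⟩, hkx⟩
        rw [h] at hm
        exact hm
    have hmul : ∀ b ∈ B, ∀ x ∈ B, x * b ∈ B := by
      intro b hb x hx
      have h := key (Equiv.mulRight b) (mulRight_mem_normalizer S hSnormal b)
        ⟨1, h1B, by simpa using hb⟩
      rw [← h]
      exact ⟨x, hx, rfl⟩
    have hinv : ∀ b ∈ B, b⁻¹ ∈ B := by
      intro b hb
      have h := key (Equiv.mulRight b⁻¹) (mulRight_mem_normalizer S hSnormal b⁻¹)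
        ⟨b, hb, by simpa using h1B⟩
      rw [← h]
      exact ⟨1, h1B, by simp⟩
    have hconj : ∀ b ∈ B, ∀ g : G, g * b * g⁻¹ ∈ B := by
      intro b hb g
      have hmem : (Equiv.mulRight g⁻¹) * (Equiv.mulLeft g) ∈ N :=
        N.mul_mem (mulRight_mem_normalizer S hSnormal g⁻¹)
          (mulLeft_mem_normalizer S hSnormal g)
      have h := key _ hmem ⟨1, h1B, by simpa using h1B⟩
      rw [← h]
      exact ⟨b, hb, by simp [Equiv.Perm.mul_apply, mul_assoc]⟩
    -- B is a normal subgroup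
    set B' : Subgroup G :=
      { carrier := B
        one_mem' := h1B
        mul_mem' := fun {a b} ha hb => hmul b hb a ha
        inv_mem' := fun {a} ha => hinv a ha } with hB'
    have hB'normal : B'.Normal := ⟨fun b hb g => hconj b hb g⟩
    -- the intersection with S, as a subgroup of S
    set T : Subgroup S := { carrier := {s : S | (s : G) ∈ B}
                            one_mem' := h1B
                            mul_mem' := fun {a b} ha hb => hmul b hb a ha
                            inv_mem' := fun {a} ha => by
                              simpa using hinv _ ha } with hT
    have hTnormal : T.Normal := ⟨fun t ht s => by
      have := hconj (t : G) ht (s : G)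
      simpa [hT] using this⟩
    rcases hSsimple.eq_bot_or_eq_top_of_normal T hTnormal with hbot | htop
    · -- then B centralizes S, contradiction with |B| ≥ 2
      exfalso
      have hBone : ∀ b ∈ B, b = 1 := by
        intro b hb
        refine hScent b ?_
        intro s hs
        have hcB : s * b * s⁻¹ * b⁻¹ ∈ B :=
          hmul b⁻¹ (hinv b hb) _ (hconj b hb s)
        have hcS : s * b * s⁻¹ * b⁻¹ ∈ S := by
          have h2 : b * s⁻¹ * b⁻¹ ∈ S := hSnormal.conj_mem _ (S.inv_mem hs) b
          have : s * (b * s⁻¹ * b⁻¹) ∈ S := S.mul_mem hs h2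
          simpa [mul_assoc] using this
        have hmemT : (⟨_, hcS⟩ : S) ∈ T := hcB
        rw [hbot] at hmemT
        have hc1 : s * b * s⁻¹ * b⁻¹ = 1 := by
          simpa [Subgroup.mem_bot, Subtype.ext_iff] using hmemT
        have h2 : s * b * s⁻¹ = b := by
          have := congrArg (· * b) hc1
          simpa [mul_assoc] using this
        calc b * s = (s * b * s⁻¹) * s := by rw [h2]
          _ = s * b := by group
      have hsub : B ⊆ {1} := fun b hb => hBone b hb
      have : B.ncard ≤ 1 := by
        have := Set.ncard_le_ncard hsub (Set.finite_singleton 1)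
        simpa using this
      omega
    · -- S ≤ B
      intro x hx
      have : (⟨x, hx⟩ : S) ∈ T := by rw [htop]; trivial
      exact this
  refine ⟨claim1, claim2, ?_⟩
  -- claim 3
  apply subset_antisymm
  · apply Set.sInter_subset_of_mem
    refine ⟨claim1, S.one_mem, ?_⟩
    obtain ⟨s, hs⟩ := exists_ne (1 : S)
    have h2 : 1 < (S : Set G).ncard := by
      rw [Set.one_lt_ncard_iff (Set.toFinite _)]
      exact ⟨(s : G), 1, s.2, S.one_mem, fun h => hs (by exact_mod_cast h)⟩
    exact h2
  · exact Set.subset_sInter fun B ⟨hB, h1B, hcard⟩ => claim2 B hB h1B hcard
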